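/- Let L = L₀ ⊕ L₁ be a nilpotent complex Leibniz superalgebra with dim L₀ = n ≥ 3 and dim L₁ = m ≥ 2, such that for every x ∈ L₀ \ L₀² the operator R_x^{n−2} vanishes on L₀ and R_x^{m−1} vanishes on L₁ (i.e., its characteristic sequence (n₁, …, n_k | m₁, …, m_s) satisfies n₁ ≤ n−2 and m₁ ≤ m−1). Suppose L is generated by two elements x₁ ∈ L₀ \ L² and y₁ ∈ L₁ \ L², that dim(L³ ∩ L₀) = n−2, and that dim L₀³ ≤ n−4, where L₀³ is the third term of the descending central series of the Leibniz algebra L₀. Then the nilindex of L is less than n + m; equivalently, L^{n+m−1} = 0. -/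

import Mathlib

/-- A complex Leibniz superalgebra: a complex vector space `V` with an internal
direct-sum decomposition `V = L0 ⊕ L1`, a bilinear bracket respecting the
`ℤ/2`-grading and satisfying the Leibniz superidentity (for homogeneous
second and third arguments). -/
structure LeibnizSuper (V : Type) [AddCommGroup V] [Module ℂ V] where
  bracket : V →ₗ[ℂ] V →ₗ[ℂ] V
  L0 : Submodule ℂ V
  L1 : Submodule ℂ V
  compl : IsCompl L0 L1
  g00 : ∀ a ∈ L0, ∀ b ∈ L0, bracket a b ∈ L0
  g01 : ∀ a ∈ L0, ∀ b ∈ L1, bracket a b ∈ L1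
  g10 : ∀ a ∈ L1, ∀ b ∈ L0, bracket a b ∈ L1
  g11 : ∀ a ∈ L1, ∀ b ∈ L1, bracket a b ∈ L0
  super_jacobi : ∀ (x : V) (α β : Bool) (y z : V),
    y ∈ (if α then L1 else L0) → z ∈ (if β then L1 else L0) →
    bracket x (bracket y z) =
      bracket (bracket x y) z - (if α && β then (-1 : ℂ) else 1) • bracket (bracket x z) y

variable {V : Type} [AddCommGroup V] [Module ℂ V]

/-- Descending central series of a Leibniz superalgebra:
`dcs S k` is `L^{k+1}`, i.e. `dcs S 0 = L¹ = L`. -/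
def LeibnizSuper.dcs (S : LeibnizSuper V) : ℕ → Submodule ℂ V
  | 0 => ⊤
  | k + 1 => Submodule.span ℂ {v | ∃ a ∈ S.dcs k, ∃ b : V, v = S.bracket a b}

/-- Descending central series of the even part `L₀` (a Leibniz algebra):
`dcs0 S k` is `L₀^{k+1}`, i.e. `dcs0 S 0 = L₀`. -/
def LeibnizSuper.dcs0 (S : LeibnizSuper V) : ℕ → Submodule ℂ V
  | 0 => S.L0
  | k + 1 => Submodule.span ℂ {v | ∃ a ∈ S.dcs0 k, ∃ b ∈ S.L0, v = S.bracket a b}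

/-- `G` generates the superalgebra: the smallest linear subspace containing `G`
and closed under the bracket is all of `V`. -/
def LeibnizSuper.generates (S : LeibnizSuper V) (G : Set V) : Prop :=
  ∀ p : Submodule ℂ V, G ⊆ p → (∀ a ∈ p, ∀ b ∈ p, S.bracket a b ∈ p) → p = ⊤

/-- The nilindex: the minimal `s ≥ 1` with `L^s = 0`. -/
noncomputable def LeibnizSuper.nilindex (S : LeibnizSuper V) : ℕ :=
  sInf {s | 1 ≤ s ∧ S.dcs (s - 1) = ⊥}

/-- The characteristic-sequence condition `n₁ ≤ n - 2`, `m₁ ≤ m - 1`: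
for every `x ∈ L₀ \ L₀²` the right multiplication operator `R_x`
satisfies `R_x^{n-2} = 0` on `L₀` and `R_x^{m-1} = 0` on `L₁`. -/
def LeibnizSuper.charSeqLE (S : LeibnizSuper V) (n m : ℕ) : Prop :=
  ∀ x ∈ S.L0, x ∉ S.dcs0 1 →
    (∀ v ∈ S.L0, ((S.bracket.flip x : Module.End ℂ V) ^ (n - 2)) v = 0) ∧
    (∀ v ∈ S.L1, ((S.bracket.flip x : Module.End ℂ V) ^ (m - 1)) v = 0)

namespace LeibnizSuper

open LeibnizSuper Submodule Module

variable (S : LeibnizSuper V)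

lemma mem_dcs_succ {a : V} {k : ℕ} (ha : a ∈ S.dcs k) (b : V) :
    S.bracket a b ∈ S.dcs (k + 1) :=
  Submodule.subset_span ⟨a, ha, b, rfl⟩

lemma dcs_succ_le (k : ℕ) : S.dcs (k + 1) ≤ S.dcs k := by
  induction k with
  | zero => exact le_top
  | succ k ih =>
      show Submodule.span ℂ _ ≤ _
      rw [Submodule.span_le]
      rintro v ⟨a, ha, b, rfl⟩
      exact mem_dcs_succ S (ih ha) b

lemma dcs_antitone {j k : ℕ} (h : j ≤ k) : S.dcs k ≤ S.dcs j := by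
  induction k with
  | zero => simp_all
  | succ k ih =>
      rcases Nat.eq_or_lt_of_le h with rfl | h'
      · exact le_rfl
      · exact (dcs_succ_le S k).trans (ih (Nat.lt_succ_iff.mp h'))

/-- projections -/
noncomputable def p0 : V →ₗ[ℂ] V :=
  S.L0.subtype ∘ₗ (S.L0.projectionOnto S.L1 S.compl)

noncomputable def p1 : V →ₗ[ℂ] V :=
  S.L1.subtype ∘ₗ (S.L1.projectionOnto S.L0 S.compl.symm)

lemma p0_mem (v : V) : S.p0 v ∈ S.L0 := Submodule.coe_mem _
lemma p1_mem (v : V) : S.p1 v ∈ S.L1 := Submodule.coe_mem _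

lemma p0_eq_of_mem {v : V} (h : v ∈ S.L0) : S.p0 v = v := by
  simp [p0, Submodule.projectionOnto_apply_of_mem_left S.compl h]

lemma p0_eq_zero_of_mem {v : V} (h : v ∈ S.L1) : S.p0 v = 0 := by
  simp [p0, Submodule.projectionOnto_apply_of_mem_right S.compl h]

lemma p1_eq_of_mem {v : V} (h : v ∈ S.L1) : S.p1 v = v := by
  simp [p1, Submodule.projectionOnto_apply_of_mem_left S.compl.symm h]

lemma p1_eq_zero_of_mem {v : V} (h : v ∈ S.L0) : S.p1 v = 0 := by
  simp [p1, Submodule.projectionOnto_apply_of_mem_right S.compl.symm h]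

lemma p0_add_p1 (v : V) : S.p0 v + S.p1 v = v := by
  obtain ⟨a, ha, b, hb, hab⟩ : ∃ a ∈ S.L0, ∃ b ∈ S.L1, a + b = v := by
    obtain ⟨x, y, hx, hy, hxy⟩ := Submodule.codisjoint_iff_exists_add_eq.mp S.compl.codisjoint v
    exact ⟨x, hx, y, hy, hxy⟩
  have h0 : S.p0 v = a := by
    rw [← hab, map_add, p0_eq_of_mem S ha, p0_eq_zero_of_mem S hb, add_zero]
  have h1 : S.p1 v = b := by
    rw [← hab, map_add, p1_eq_zero_of_mem S ha, p1_eq_of_mem S hb, zero_add]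
  rw [h0, h1, hab]

lemma dcs_graded (k : ℕ) : ∀ v ∈ S.dcs k, S.p0 v ∈ S.dcs k ∧ S.p1 v ∈ S.dcs k := by
  induction k with
  | zero => intro v _; exact ⟨trivial, trivial⟩
  | succ k ih =>
      intro v hv
      have : S.dcs (k+1) ≤ (S.dcs (k+1)).comap S.p0 ⊓ (S.dcs (k+1)).comap S.p1 := by
        show Submodule.span ℂ _ ≤ _
        rw [Submodule.span_le]
        rintro w ⟨a, ha, b, rfl⟩
        have ha0 := (ih a ha).1
        have ha1 := (ih a ha).2
        have hexp : S.bracket a b =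
            S.bracket (S.p0 a) (S.p0 b) + S.bracket (S.p0 a) (S.p1 b)
            + S.bracket (S.p1 a) (S.p0 b) + S.bracket (S.p1 a) (S.p1 b) := by
          conv_lhs => rw [← p0_add_p1 S a, ← p0_add_p1 S b]
          simp [map_add, LinearMap.add_apply]
          abel
        have e0 : S.p0 (S.bracket a b)
            = S.bracket (S.p0 a) (S.p0 b) + S.bracket (S.p1 a) (S.p1 b) := by
          rw [hexp]
          simp only [map_add]
          rw [p0_eq_of_mem S (S.g00 _ (p0_mem S a) _ (p0_mem S b)),
            p0_eq_zero_of_mem S (S.g01 _ (p0_mem S a) _ (p1_mem S b)),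
            p0_eq_zero_of_mem S (S.g10 _ (p1_mem S a) _ (p0_mem S b)),
            p0_eq_of_mem S (S.g11 _ (p1_mem S a) _ (p1_mem S b))]
          abel
        have e1 : S.p1 (S.bracket a b)
            = S.bracket (S.p0 a) (S.p1 b) + S.bracket (S.p1 a) (S.p0 b) := by
          rw [hexp]
          simp only [map_add]
          rw [p1_eq_zero_of_mem S (S.g00 _ (p0_mem S a) _ (p0_mem S b)),
            p1_eq_of_mem S (S.g01 _ (p0_mem S a) _ (p1_mem S b)),
            p1_eq_of_mem S (S.g10 _ (p1_mem S a) _ (p0_mem S b)),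
            p1_eq_zero_of_mem S (S.g11 _ (p1_mem S a) _ (p1_mem S b))]
          abel
        constructor
        · show S.p0 (S.bracket a b) ∈ S.dcs (k+1)
          rw [e0]
          exact add_mem (mem_dcs_succ S ha0 _) (mem_dcs_succ S ha1 _)
        · show S.p1 (S.bracket a b) ∈ S.dcs (k+1)
          rw [e1]
          exact add_mem (mem_dcs_succ S ha0 _) (mem_dcs_succ S ha1 _)
      exact this hv

end LeibnizSuper

namespace LeibnizSuper

variable (S : LeibnizSuper V)

lemma jac00 (a y z : V) (hy : y ∈ S.L0) (hz : z ∈ S.L0) :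
    S.bracket a (S.bracket y z)
      = S.bracket (S.bracket a y) z - S.bracket (S.bracket a z) y := by
  have := S.super_jacobi a false false y z (by simpa) (by simpa)
  simpa using this

lemma jac01 (a y z : V) (hy : y ∈ S.L0) (hz : z ∈ S.L1) :
    S.bracket a (S.bracket y z)
      = S.bracket (S.bracket a y) z - S.bracket (S.bracket a z) y := by
  have := S.super_jacobi a false true y z (by simpa) (by simpa)
  simpa using this

lemma jac10 (a y z : V) (hy : y ∈ S.L1) (hz : z ∈ S.L0) :
    S.bracket a (S.bracket y z)
      = S.bracket (S.bracket a y) z - S.bracket (S.bracket a z) y := by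
  have := S.super_jacobi a true false y z (by simpa) (by simpa)
  simpa using this

lemma jac11 (a y z : V) (hy : y ∈ S.L1) (hz : z ∈ S.L1) :
    S.bracket a (S.bracket y z)
      = S.bracket (S.bracket a y) z + S.bracket (S.bracket a z) y := by
  have := S.super_jacobi a true true y z (by simpa) (by simpa)
  simpa [sub_neg_eq_add] using this

/-- `[L^{k+1}, L^{l+1}] ⊆ L^{k+l+2}` -/
lemma bracket_mem_dcs_add :
    ∀ (l k : ℕ) (a : V), a ∈ S.dcs k → ∀ v ∈ S.dcs l, S.bracket a v ∈ S.dcs (k + l + 1) := by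
  intro l
  induction l with
  | zero => intro k a ha v _; exact mem_dcs_succ S ha v
  | succ l ih =>
      intro k a ha v hv
      have : S.dcs (l+1) ≤ (S.dcs (k + (l+1) + 1)).comap (S.bracket a) := by
        show Submodule.span ℂ _ ≤ _
        rw [Submodule.span_le]
        rintro w ⟨c, hc, d, rfl⟩
        show S.bracket a (S.bracket c d) ∈ S.dcs (k + (l+1) + 1)
        obtain ⟨hc0, hc1⟩ := dcs_graded S l c hc
        have hd := p0_add_p1 S d
        have key : ∀ c' : V, c' ∈ S.dcs l → ((c' ∈ S.L0) ∨ (c' ∈ S.L1)) →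
            ∀ d' : V, ((d' ∈ S.L0) ∨ (d' ∈ S.L1)) →
            S.bracket a (S.bracket c' d') ∈ S.dcs (k + (l+1) + 1) := by
          intro c' hc' hc'p d' hd'p
          have h1 : S.bracket (S.bracket a c') d' ∈ S.dcs (k + (l+1) + 1) := by
            have := ih k a ha c' hc'
            have := mem_dcs_succ S this d'
            convert this using 2
            omega
          have h2 : S.bracket (S.bracket a d') c' ∈ S.dcs (k + (l+1) + 1) := by
            have had : S.bracket a d' ∈ S.dcs (k+1) := mem_dcs_succ S ha d'
            have := ih (k+1) _ had c' hc'
            convert this using 2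
            omega
          rcases hc'p with h | h <;> rcases hd'p with h' | h'
          · rw [jac00 S a c' d' h h']; exact sub_mem h1 h2
          · rw [jac01 S a c' d' h h']; exact sub_mem h1 h2
          · rw [jac10 S a c' d' h h']; exact sub_mem h1 h2
          · rw [jac11 S a c' d' h h']; exact add_mem h1 h2
        have expand : S.bracket c d
            = S.bracket (S.p0 c) (S.p0 d) + S.bracket (S.p0 c) (S.p1 d)
            + S.bracket (S.p1 c) (S.p0 d) + S.bracket (S.p1 c) (S.p1 d) := by
          conv_lhs => rw [← p0_add_p1 S c, ← p0_add_p1 S d]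
          simp [map_add, LinearMap.add_apply]
          abel
        rw [expand]
        simp only [map_add]
        exact add_mem (add_mem (add_mem
          (key _ hc0 (Or.inl (p0_mem S c)) _ (Or.inl (p0_mem S d)))
          (key _ hc0 (Or.inl (p0_mem S c)) _ (Or.inr (p1_mem S d))))
          (key _ hc1 (Or.inr (p1_mem S c)) _ (Or.inl (p0_mem S d))))
          (key _ hc1 (Or.inr (p1_mem S c)) _ (Or.inr (p1_mem S d)))
      exact this hv

lemma dcs_stall {k : ℕ} (h : S.dcs (k+1) = S.dcs k) (hnilp : ∃ s, S.dcs s = ⊥) :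
    S.dcs k = ⊥ := by
  obtain ⟨s, hs⟩ := hnilp
  have hall : ∀ j, S.dcs (k + j) = S.dcs k := by
    intro j
    induction j with
    | zero => rfl
    | succ j ih =>
        have : S.dcs (k + j + 1)
            = Submodule.span ℂ {v | ∃ a ∈ S.dcs (k+j), ∃ b : V, v = S.bracket a b} := rfl
        rw [show k + (j+1) = k + j + 1 by omega, this, ih]
        exact h
  rcases le_total s k with hle | hle
  · exact le_bot_iff.mp (hs ▸ dcs_antitone S hle)
  · have := hall (s - k)
    rw [show k + (s - k) = s by omega, hs] at this
    exact this.symm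

lemma dcs0_one_le : S.dcs0 1 ≤ S.dcs 1 := by
  show Submodule.span ℂ _ ≤ _
  rw [Submodule.span_le]
  rintro v ⟨a, ha, b, hb, rfl⟩
  exact mem_dcs_succ S (by trivial) b

end LeibnizSuper

namespace LeibnizSuper

variable (S : LeibnizSuper V)

/-- right multiplication operator -/
noncomputable abbrev Rop (b : V) : Module.End ℂ V := S.bracket.flip b

@[simp] lemma Rop_apply (b v : V) : S.Rop b v = S.bracket v b := rfl

lemma pow_apply_succ (T : Module.End ℂ V) (n : ℕ) (v : V) :
    (T ^ (n+1)) v = T ((T ^ n) v) := by rw [pow_succ']; rfl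

lemma pow_apply_succ' (T : Module.End ℂ V) (n : ℕ) (v : V) :
    (T ^ (n+1)) v = (T ^ n) (T v) := by rw [pow_succ]; rfl

/-- `T` raises the filtration by at least `w`. -/
def Shifts (T : Module.End ℂ V) (w : ℕ) : Prop :=
  ∀ k : ℕ, ∀ v ∈ S.dcs k, T v ∈ S.dcs (k + w)

lemma shifts_Rop {b : V} {c : ℕ} (hb : b ∈ S.dcs c) : S.Shifts (S.Rop b) (c + 1) := by
  intro k v hv
  have := bracket_mem_dcs_add S c k v hv b hb
  simpa [show k + c + 1 = k + (c+1) by omega] using this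

lemma Shifts.mono {T : Module.End ℂ V} {w w' : ℕ} (h : S.Shifts T w) (hw : w' ≤ w) :
    S.Shifts T w' := fun k v hv => dcs_antitone S (by omega) (h k v hv)

lemma Shifts.pow {T : Module.End ℂ V} {w : ℕ} (h : S.Shifts T w) (j : ℕ) :
    S.Shifts (T ^ j) (j * w) := by
  induction j with
  | zero => intro k v hv; simpa using hv
  | succ j ih =>
      intro k v hv
      have h1 : (T ^ (j+1)) v = T ((T ^ j) v) := by
        rw [pow_succ']; rfl
      rw [h1]
      have := h _ _ (ih k v hv)
      simpa [show k + j*w + w = k + (j+1)*w by ring] using this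

/-- swapping `U` past `T^s` costs a `J`-error -/
lemma comm_shift {T U J : Module.End ℂ V} (hcomm : ∀ v, U (T v) = T (U v) + J v)
    (hT : S.Shifts T 1) {wJ : ℕ} (hJ : S.Shifts J wJ) :
    ∀ s k : ℕ, ∀ v ∈ S.dcs k, U ((T ^ (s+1)) v) - (T ^ (s+1)) (U v) ∈ S.dcs (k + s + wJ) := by
  intro s
  induction s with
  | zero =>
      intro k v hv
      have h1 : (T ^ 1) v = T v := by simp
      have h2 : (T ^ 1) (U v) = T (U v) := by simp
      rw [h1, h2, hcomm v, add_sub_cancel_left]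
      exact hJ k v hv
  | succ s ih =>
      intro k v hv
      have h1 : (T ^ (s+2)) v = (T ^ (s+1)) (T v) := by
        rw [pow_succ]; rfl
      have h2 : (T ^ (s+2)) (U v) = (T ^ (s+1)) (T (U v)) := by
        rw [pow_succ]; rfl
      have key := ih (k+1) (T v) (by simpa [Nat.add_comm] using hT k v hv)
      -- key : U ((T^(s+1)) (T v)) - (T^(s+1)) (U (T v)) ∈ dcs (k+1+s+wJ)
      have hUT : (T ^ (s+1)) (U (T v)) = (T ^ (s+2)) (U v) + (T ^ (s+1)) (J v) := by
        rw [hcomm v, map_add, h2]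
      have hJv : (T ^ (s+1)) (J v) ∈ S.dcs (k + (s+1) + wJ) := by
        have h3 : (T ^ (s+1)) (J v) ∈ S.dcs (k + wJ + (s+1)) := by
          simpa using Shifts.pow S hT (s+1) _ _ (hJ k v hv)
        exact dcs_antitone S (by omega) h3
      have : U ((T ^ (s+2)) v) - (T ^ (s+2)) (U v)
          = (U ((T ^ (s+1)) (T v)) - (T ^ (s+1)) (U (T v))) + (T ^ (s+1)) (J v) := by
        rw [h1, hUT]; abel
      rw [this]
      exact add_mem (dcs_antitone S (by omega) key) hJv

/-- swapping `U^t` past `T^s` -/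
lemma comm_shift_pows {T U : Module.End ℂ V} {wU : ℕ}
    (hT : S.Shifts T 1) (hU : S.Shifts U wU)
    (hswap : ∀ s k : ℕ, ∀ v ∈ S.dcs k, U ((T ^ s) v) - (T ^ s) (U v) ∈ S.dcs (k + s + wU + 1)) :
    ∀ t s k : ℕ, ∀ v ∈ S.dcs k,
      (U ^ t) ((T ^ s) v) - (T ^ s) ((U ^ t) v) ∈ S.dcs (k + s + t * wU + 1) := by
  intro t
  induction t with
  | zero => intro s k v hv; simpa using zero_mem _
  | succ t ih =>
      intro s k v hv
      have e1 : (U ^ (t+1)) ((T ^ s) v) = (U ^ t) (U ((T ^ s) v)) := by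
        rw [pow_succ]; rfl
      have e2 : (U ^ (t+1)) v = (U ^ t) (U v) := by
        rw [pow_succ]; rfl
      have d1 : U ((T ^ s) v) = (T ^ s) (U v) + (U ((T ^ s) v) - (T ^ s) (U v)) := by abel
      have hd : (U ^ t) (U ((T ^ s) v) - (T ^ s) (U v)) ∈ S.dcs (k + s + (t+1) * wU + 1) := by
        have := Shifts.pow S hU t _ _ (hswap s k v hv)
        refine dcs_antitone S (by rw [Nat.succ_mul]; omega) this
      have hmain := ih s (k + wU) (U v) (hU k v hv)
      have : (U ^ (t+1)) ((T ^ s) v) - (T ^ s) ((U ^ (t+1)) v)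
          = ((U ^ t) ((T ^ s) (U v)) - (T ^ s) ((U ^ t) (U v)))
            + (U ^ t) (U ((T ^ s) v) - (T ^ s) (U v)) := by
        rw [e1, e2, d1, map_add]; abel
      rw [this]
      refine add_mem (dcs_antitone S (by rw [Nat.succ_mul]; omega) hmain) hd

end LeibnizSuper

namespace LeibnizSuper

open Finset

lemma sum_pow_smul_eq_zero {K : ℕ} (w : ℕ → V)
    (h : ∀ c : ℂ, ∑ j ∈ Finset.range (K+1), c^j • w j = 0) {j₀ : ℕ} (hj : j₀ ≤ K) :
    w j₀ = 0 := by
  rw [← Module.forall_dual_apply_eq_zero_iff ℂ (w j₀)]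
  intro φ
  set p : Polynomial ℂ := ∑ j ∈ Finset.range (K+1), Polynomial.C (φ (w j)) * Polynomial.X ^ j
    with hp
  have heval : ∀ c : ℂ, p.eval c = 0 := by
    intro c
    have := congrArg φ (h c)
    simp only [map_sum, map_smul, map_zero] at this
    rw [hp]
    simp only [Polynomial.eval_finset_sum, Polynomial.eval_mul, Polynomial.eval_C,
      Polynomial.eval_pow, Polynomial.eval_X]
    rw [← this]
    congr 1
    ext j
    simp [smul_eq_mul, mul_comm]
  have hp0 : p = 0 := Polynomial.funext (fun r => by simp [heval r])
  have := congrArg (fun q => Polynomial.coeff q j₀) hp0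
  simp only [hp, Polynomial.finset_sum_coeff, Polynomial.coeff_C_mul, Polynomial.coeff_X_pow,
    Polynomial.coeff_zero] at this
  simpa [mul_ite, Finset.sum_ite_eq, Finset.mem_range, Nat.lt_succ_iff.mpr hj] using this

variable (S : LeibnizSuper V)

/-- binomial-type expansion of `(P + c•Q)^K` with filtration control -/
lemma expand_pow {P Q : Module.End ℂ V}
    (hP : S.Shifts P 1) (hQ : S.Shifts Q 2)
    (hswap : ∀ s k : ℕ, ∀ v ∈ S.dcs k, Q ((P ^ s) v) - (P ^ s) (Q v) ∈ S.dcs (k + s + 3))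
    (K : ℕ) {v : V} {ℓ : ℕ} (hv : v ∈ S.dcs ℓ) :
    ∃ w : ℕ → V, (∀ j, K < j → w j = 0) ∧
      (∀ c : ℂ, ((P + c • Q) ^ K) v = ∑ j ∈ Finset.range (K+1), c^j • w j) ∧
      (∀ j, j ≤ K → w j - (K.choose j : ℂ) • ((P ^ (K-j)) ((Q ^ j) v)) ∈ S.dcs (ℓ + K + j + 1)) := by
  induction K with
  | zero =>
      refine ⟨fun j => if j = 0 then v else 0, ?_, ?_, ?_⟩
      · intro j hj
        have hne : j ≠ 0 := by omega
        simp [hne]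
      · intro c; simp
      · intro j hj
        interval_cases j
        simp only [if_pos rfl, Nat.choose_self, Nat.cast_one, one_smul, pow_zero]
        simpa using zero_mem (S.dcs (ℓ + 0 + 0 + 1))
  | succ K ih =>
      obtain ⟨w, hw0, hwsum, hwcong⟩ := ih
      set wpred : ℕ → V := fun j => match j with | 0 => 0 | (j+1) => w j with hwpred
      refine ⟨fun j => P (w j) + Q (wpred j), ?_, ?_, ?_⟩
      · intro j hj
        match j, hj with
        | (j+1), hj =>
          have h1 : w (j+1) = 0 := hw0 _ (by omega)
          have h2 : w j = 0 := hw0 _ (by omega)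
          show P (w (j+1)) + Q (w j) = 0
          simp [h1, h2]
      · intro c
        have hstep : ((P + c • Q) ^ (K+1)) v = (P + c • Q) (((P + c • Q) ^ K) v) :=
          pow_apply_succ _ K v
        rw [hstep, hwsum c]
        simp only [map_sum, LinearMap.add_apply, LinearMap.smul_apply, map_smul]
        have hrhs : ∑ j ∈ Finset.range (K+2), c^j • (P (w j) + Q (wpred j))
            = ∑ j ∈ Finset.range (K+2), c^j • P (w j)
              + ∑ j ∈ Finset.range (K+2), c^j • Q (wpred j) := by
          rw [← Finset.sum_add_distrib]
          exact Finset.sum_congr rfl (fun j _ => smul_add _ _ _)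
        have h1 : ∑ j ∈ Finset.range (K+2), c^j • P (w j)
            = ∑ j ∈ Finset.range (K+1), c^j • P (w j) := by
          rw [Finset.sum_range_succ, hw0 (K+1) (by omega)]
          simp
        have h2 : ∑ j ∈ Finset.range (K+2), c^j • Q (wpred j)
            = ∑ j ∈ Finset.range (K+1), c^(j+1) • Q (w j) := by
          rw [Finset.sum_range_succ' (fun j => c^j • Q (wpred j)) (K+1)]
          have : wpred 0 = 0 := rfl
          simp [this]
          rfl
        have h3 : ∀ j ∈ Finset.range (K+1), c^j • (c • Q (w j)) = c^(j+1) • Q (w j) := by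
          intro j _
          rw [pow_succ, mul_smul, smul_comm]
        calc ∑ j ∈ Finset.range (K+1), c^j • (P (w j) + c • Q (w j))
            = ∑ j ∈ Finset.range (K+1), c^j • P (w j)
              + ∑ j ∈ Finset.range (K+1), c^j • (c • Q (w j)) := by
              rw [← Finset.sum_add_distrib]
              exact Finset.sum_congr rfl (fun j _ => smul_add _ _ _)
          _ = ∑ j ∈ Finset.range (K+1), c^j • P (w j)
              + ∑ j ∈ Finset.range (K+1), c^(j+1) • Q (w j) := by
              rw [Finset.sum_congr rfl h3]
          _ = ∑ j ∈ Finset.range (K+2), c^j • (P (w j) + Q (wpred j)) := by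
              rw [hrhs, h1, h2]
      · intro j hj
        match j with
        | 0 =>
            show P (w 0) + Q (wpred 0) - _ ∈ _
            have hq0 : Q (wpred 0) = 0 := by
              show Q 0 = 0
              simp
            rw [hq0]
            simp only [Nat.choose_zero_right, Nat.cast_one, one_smul, pow_zero, Nat.sub_zero,
              Module.End.one_apply]
            have h1 := hwcong 0 (by omega)
            simp only [Nat.choose_zero_right, Nat.cast_one, one_smul, Nat.sub_zero, pow_zero,
              Module.End.one_apply] at h1
            have h2 : P (w 0) + 0 - (P ^ (K+1)) v = P (w 0 - (P ^ K) v) := by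
              rw [add_zero, map_sub, pow_apply_succ]
            rw [h2]
            have := hP _ _ h1
            exact dcs_antitone S (by omega) this
        | (j+1) =>
            show P (w (j+1)) + Q (w j) - _ ∈ _
            rcases Nat.lt_or_ge (j+1) (K+1) with hlt | hge
            · -- main case : j + 1 ≤ K
              have hjK : j + 1 ≤ K := by omega
              have hA1 : P (w (j+1) - ((K.choose (j+1) : ℂ)) • ((P ^ (K-(j+1))) ((Q ^ (j+1)) v)))
                  ∈ S.dcs (ℓ + K + (j+1) + 2) := by
                have := hP _ _ (hwcong (j+1) hjK)
                exact dcs_antitone S (by omega) this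
              have hA2 : Q (w j - ((K.choose j : ℂ)) • ((P ^ (K-j)) ((Q ^ j) v)))
                  ∈ S.dcs (ℓ + K + j + 3) := by
                have := hQ _ _ (hwcong j (by omega))
                exact dcs_antitone S (by omega) this
              have hA3 : Q ((P ^ (K-j)) ((Q ^ j) v)) - (P ^ (K-j)) (Q ((Q ^ j) v))
                  ∈ S.dcs (ℓ + K + j + 3) := by
                have hQj : (Q ^ j) v ∈ S.dcs (ℓ + j * 2) := Shifts.pow S hQ j _ _ hv
                have := hswap (K-j) _ _ hQj
                refine dcs_antitone S (by omega) this
              have hPascal : ((K+1).choose (j+1) : ℂ) = (K.choose j : ℂ) + (K.choose (j+1) : ℂ) := by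
                rw [Nat.choose_succ_succ]
                push_cast
                ring
              have hexp1 : P ((P ^ (K-(j+1))) ((Q ^ (j+1)) v)) = (P ^ (K-j)) ((Q ^ (j+1)) v) := by
                have he : K - j = (K - (j+1)) + 1 := by omega
                rw [he]
                exact (pow_apply_succ P (K-(j+1)) ((Q ^ (j+1)) v)).symm
              have hexp2 : Q ((Q ^ j) v) = (Q ^ (j+1)) v := (pow_apply_succ Q j v).symm
              have decomp : P (w (j+1)) + Q (w j)
                  - ((K+1).choose (j+1) : ℂ) • ((P ^ (K+1-(j+1))) ((Q ^ (j+1)) v))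
                  = P (w (j+1) - ((K.choose (j+1) : ℂ)) • ((P ^ (K-(j+1))) ((Q ^ (j+1)) v)))
                    + Q (w j - ((K.choose j : ℂ)) • ((P ^ (K-j)) ((Q ^ j) v)))
                    + (K.choose j : ℂ) • (Q ((P ^ (K-j)) ((Q ^ j) v)) - (P ^ (K-j)) (Q ((Q ^ j) v))) := by
                rw [map_sub, map_sub, map_smul, map_smul, hexp1, hexp2, hPascal,
                  show K + 1 - (j+1) = K - j by omega, smul_sub, add_smul]
                abel
              rw [decomp]
              refine add_mem (add_mem (dcs_antitone S (by omega) hA1)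
                (dcs_antitone S (by omega) hA2)) ?_
              exact Submodule.smul_mem _ _ (dcs_antitone S (by omega) hA3)
            · -- j + 1 = K + 1
              have hjeq : j = K := by omega
              subst hjeq
              have h1 : w (j+1) = 0 := hw0 _ (by omega)
              simp only [h1, map_zero, zero_add, Nat.choose_self, Nat.cast_one, one_smul,
                Nat.sub_self, pow_zero, Module.End.one_apply]
              have h2 := hwcong j (le_refl j)
              simp only [Nat.choose_self, Nat.cast_one, one_smul, Nat.sub_self, pow_zero,
                Module.End.one_apply] at h2
              have h3 : Q (w j) - (Q ^ (j+1)) v = Q (w j - (Q ^ j) v) := by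
                rw [map_sub, pow_apply_succ]
              rw [h3]
              have := hQ _ _ h2
              exact dcs_antitone S (by omega) this

end LeibnizSuper

namespace LeibnizSuper

variable (S : LeibnizSuper V)

/-- the kill lemma : a coefficient of the expanded family identity vanishes -/
lemma kill {P Q : Module.End ℂ V}
    (hP : S.Shifts P 1) (hQ : S.Shifts Q 2)
    (hswap : ∀ s k : ℕ, ∀ v ∈ S.dcs k, Q ((P ^ s) v) - (P ^ s) (Q v) ∈ S.dcs (k + s + 3))
    {K : ℕ} {v : V} {ℓ : ℕ} (hv : v ∈ S.dcs ℓ)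
    (hfam : ∀ c : ℂ, ((P + c • Q) ^ K) v = 0)
    {a b : ℕ} (hab : a + b = K) :
    (P ^ a) ((Q ^ b) v) ∈ S.dcs (ℓ + a + 2*b + 1) := by
  obtain ⟨w, hw0, hwsum, hwcong⟩ := expand_pow S hP hQ hswap K hv
  have hvan : w b = 0 := by
    refine sum_pow_smul_eq_zero (K := K) w (fun c => ?_) (by omega : b ≤ K)
    rw [← hwsum c]
    exact hfam c
  have hcong := hwcong b (by omega)
  rw [hvan, zero_sub] at hcong
  have := neg_mem hcong
  rw [neg_neg] at this
  have hKb : K - b = a := by omega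
  rw [hKb] at this
  have hC : ((K.choose b : ℂ)) ≠ 0 := by
    have := Nat.choose_pos (show b ≤ K by omega)
    exact_mod_cast Nat.cast_ne_zero.mpr (by omega)
  have hmem := (Submodule.smul_mem_iff _ hC).mp this
  refine dcs_antitone S (by omega) hmem

end LeibnizSuper

namespace LeibnizSuper

open Module Submodule

variable (S : LeibnizSuper V)

lemma step_decomp [FiniteDimensional ℂ V] {k : ℕ} {r : V}
    (hr : r ∈ S.dcs k) (hrn : r ∉ S.dcs (k+1))
    (hone : finrank ℂ (S.dcs k) = finrank ℂ (S.dcs (k+1)) + 1) :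
    ∀ a ∈ S.dcs k, ∃ c : ℂ, a - c • r ∈ S.dcs (k+1) := by
  have hr0 : r ≠ 0 := fun h => hrn (h ▸ zero_mem _)
  have hle : (ℂ ∙ r) ⊔ S.dcs (k+1) ≤ S.dcs k := by
    refine sup_le ?_ (dcs_succ_le S k)
    rwa [Submodule.span_singleton_le_iff_mem]
  have hdisj : Disjoint (S.dcs (k+1)) (ℂ ∙ r) :=
    (Submodule.disjoint_span_singleton' hr0).mpr hrn
  have hrank : finrank ℂ ((ℂ ∙ r) ⊔ S.dcs (k+1) : Submodule ℂ V)
      = finrank ℂ (S.dcs (k+1)) + 1 := by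
    have h2 := Submodule.finrank_sup_add_finrank_inf_eq (ℂ ∙ r) (S.dcs (k+1))
    rw [show (ℂ ∙ r) ⊓ S.dcs (k+1) = ⊥ from by
        rw [inf_comm]; exact disjoint_iff.mp hdisj] at h2
    rw [finrank_bot, add_zero, finrank_span_singleton hr0] at h2
    omega
  have heq : (ℂ ∙ r) ⊔ S.dcs (k+1) = S.dcs k := by
    apply Submodule.eq_of_le_of_finrank_le hle
    omega
  intro a ha
  rw [← heq] at ha
  obtain ⟨s, hs, w, hw, rfl⟩ := Submodule.mem_sup.mp ha
  obtain ⟨c, rfl⟩ := Submodule.mem_span_singleton.mp hs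
  exact ⟨c, by simpa using hw⟩

lemma step_span [FiniteDimensional ℂ V] (x y : V)
    (htop : S.dcs 1 ⊔ Submodule.span ℂ {x, y} = ⊤) {k : ℕ} {r : V}
    (hr : r ∈ S.dcs k) (hrn : r ∉ S.dcs (k+1))
    (hone : finrank ℂ (S.dcs k) = finrank ℂ (S.dcs (k+1)) + 1) :
    ∀ w ∈ S.dcs (k+1), ∃ c1 c2 : ℂ,
      w - (c1 • S.bracket r x + c2 • S.bracket r y) ∈ S.dcs (k+2) := by
  have hdec := step_decomp S hr hrn hone
  intro w hw
  have hspan : S.dcs (k+1)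
      = Submodule.span ℂ {v | ∃ a ∈ S.dcs k, ∃ b : V, v = S.bracket a b} := rfl
  rw [hspan] at hw
  induction hw using Submodule.span_induction with
  | mem v hv =>
      obtain ⟨a, ha, b, rfl⟩ := hv
      obtain ⟨c, hc⟩ := hdec a ha
      have hb : b ∈ S.dcs 1 ⊔ Submodule.span ℂ {x, y} := htop ▸ Submodule.mem_top
      obtain ⟨w₁, hw₁, s, hs, rfl⟩ := Submodule.mem_sup.mp hb
      obtain ⟨α, β, rfl⟩ := Submodule.mem_span_pair.mp hs
      refine ⟨c * α, c * β, ?_⟩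
      have hexp : S.bracket a (w₁ + (α • x + β • y))
          - ((c*α) • S.bracket r x + (c*β) • S.bracket r y)
          = S.bracket (a - c • r) (α • x + β • y) + S.bracket a w₁ := by
        simp only [map_add, map_smul, LinearMap.add_apply, LinearMap.smul_apply, map_sub,
          LinearMap.sub_apply, mul_smul]
        module
      rw [hexp]
      refine add_mem ?_ ?_
      · have := mem_dcs_succ S hc (α • x + β • y)
        exact this
      · have := bracket_mem_dcs_add S 1 k a ha _ hw₁
        exact this
  | zero => exact ⟨0, 0, by simpa using zero_mem _⟩
  | add v₁ v₂ h₁ h₂ ih₁ ih₂ =>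
      obtain ⟨c1, c2, hc⟩ := ih₁
      obtain ⟨d1, d2, hd⟩ := ih₂
      refine ⟨c1 + d1, c2 + d2, ?_⟩
      have : v₁ + v₂ - ((c1+d1) • S.bracket r x + (c2+d2) • S.bracket r y)
          = (v₁ - (c1 • S.bracket r x + c2 • S.bracket r y))
            + (v₂ - (d1 • S.bracket r x + d2 • S.bracket r y)) := by
        module
      rw [this]
      exact add_mem hc hd
  | smul t v hv ih =>
      obtain ⟨c1, c2, hc⟩ := ih
      refine ⟨t * c1, t * c2, ?_⟩
      have : t • v - ((t*c1) • S.bracket r x + (t*c2) • S.bracket r y)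
          = t • (v - (c1 • S.bracket r x + c2 • S.bracket r y)) := by
        module
      rw [this]
      exact Submodule.smul_mem _ _ hc

/-- survivor lemma, odd case -/
lemma survivor1 {k2 : ℕ} {v e f : V} {c1 c2 : ℂ}
    (hv1 : v ∈ S.L1) (hvp : v ∉ S.dcs k2) (he : e ∈ S.L1) (hf : f ∈ S.L0)
    (hcombo : v - (c1 • e + c2 • f) ∈ S.dcs k2) : e ∉ S.dcs k2 := by
  intro hep
  have h1 : v - c2 • f ∈ S.dcs k2 := by
    have := add_mem hcombo (Submodule.smul_mem _ c1 hep)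
    have heq : v - (c1 • e + c2 • f) + c1 • e = v - c2 • f := by module
    rwa [heq] at this
  have h2 := (dcs_graded S k2 _ h1).2
  rw [map_sub, map_smul, p1_eq_of_mem S hv1, p1_eq_zero_of_mem S hf] at h2
  simp at h2
  exact hvp h2

/-- survivor lemma, even case -/
lemma survivor0 {k2 : ℕ} {v e f : V} {c1 c2 : ℂ}
    (hv0 : v ∈ S.L0) (hvp : v ∉ S.dcs k2) (he : e ∈ S.L0) (hf : f ∈ S.L1)
    (hcombo : v - (c1 • e + c2 • f) ∈ S.dcs k2) : e ∉ S.dcs k2 := by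
  intro hep
  have h1 : v - c2 • f ∈ S.dcs k2 := by
    have := add_mem hcombo (Submodule.smul_mem _ c1 hep)
    have heq : v - (c1 • e + c2 • f) + c1 • e = v - c2 • f := by module
    rwa [heq] at this
  have h2 := (dcs_graded S k2 _ h1).1
  rw [map_sub, map_smul, p0_eq_of_mem S hv0, p0_eq_zero_of_mem S hf] at h2
  simp at h2
  exact hvp h2

end LeibnizSuper

namespace LeibnizSuper

open Module Submodule

variable (S : LeibnizSuper V)

lemma chain_exists [FiniteDimensional ℂ V]
    (x y u : V) (N : ℕ) (hN1 : 1 ≤ N)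
    (δ : ℕ → Prop) (fl : ℕ → ℕ)
    (htop : S.dcs 1 ⊔ Submodule.span ℂ {x, y} = ⊤)
    (hone : ∀ k, 1 ≤ k → k ≤ N →
      finrank ℂ (S.dcs k) = finrank ℂ (S.dcs (k+1)) + 1)
    (hδT : ∀ k, 1 ≤ k → k ≤ N → δ k →
      S.dcs (k+1) ⊓ S.L0 = S.dcs k ⊓ S.L0 ∧ S.dcs (k+1) ⊓ S.L1 < S.dcs k ⊓ S.L1)
    (hδF : ∀ k, 1 ≤ k → k ≤ N → ¬ δ k →
      S.dcs (k+1) ⊓ S.L1 = S.dcs k ⊓ S.L1 ∧ S.dcs (k+1) ⊓ S.L0 < S.dcs k ⊓ S.L0)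
    (hδ1 : ¬ δ 1)
    (uy : ℕ)
    (hu : (u = x ∧ uy = 0) ∨ (u = y ∧ uy = 1))
    (hx0 : x ∈ S.L0) (hy1 : y ∈ S.L1)
    (huu : S.bracket u u ∉ S.dcs 2)
    (hfl1 : fl 1 = 0)
    (hflsame : ∀ k, 1 ≤ k → (δ k ↔ δ (k+1)) → fl (k+1) = fl k)
    (hflflip : ∀ k, 1 ≤ k → ¬ (δ k ↔ δ (k+1)) → fl (k+1) = fl k + 1) :
    ∀ k, 1 ≤ k → k ≤ N → ∃ r : V,
      r ∈ S.dcs k ∧ r ∉ S.dcs (k+1) ∧ (δ k → r ∈ S.L1) ∧ (¬ δ k → r ∈ S.L0) ∧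
      ∃ F : ℕ, F ≤ k ∧ F = uy + fl k ∧
        r - ((S.Rop x) ^ (k - F)) (((S.Rop y) ^ F) u) ∈ S.dcs (k+1) := by
  have hx00 : x ∈ S.dcs 0 := by trivial
  have hy00 : y ∈ S.dcs 0 := by trivial
  have hRx : S.Shifts (S.Rop x) 1 := shifts_Rop S hx00
  have hRy : S.Shifts (S.Rop y) 1 := shifts_Rop S hy00
  have hxy2 : S.bracket x y ∈ S.dcs 2 := by
    have hmem1 : S.bracket x y ∈ S.dcs 1 ⊓ S.L1 :=
      ⟨mem_dcs_succ S (by trivial) y, S.g01 x hx0 y hy1⟩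
    have heq := (hδF 1 le_rfl hN1 hδ1).1
    rw [← heq] at hmem1
    exact hmem1.1
  have hJ : S.Shifts (S.Rop (S.bracket x y)) 3 := shifts_Rop S hxy2
  have hcommxy : ∀ v : V, (S.Rop y) ((S.Rop x) v)
      = (S.Rop x) ((S.Rop y) v) + (S.Rop (S.bracket x y)) v := by
    intro v
    have := jac01 S v x y hx0 hy1
    simp only [Rop_apply]
    rw [this]
    abel
  have hswapxy : ∀ s k : ℕ, ∀ v ∈ S.dcs k,
      (S.Rop y) (((S.Rop x) ^ s) v) - ((S.Rop x) ^ s) ((S.Rop y) v) ∈ S.dcs (k + s + 2) := by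
    intro s
    match s with
    | 0 => intro k v hv; simpa using zero_mem _
    | (s+1) =>
        intro k v hv
        have := comm_shift S hcommxy hRx hJ s k v hv
        exact dcs_antitone S (by omega) this
  intro k hk1
  induction k, hk1 using Nat.le_induction with
  | base =>
      intro h1N
      have hBuu0 : S.bracket u u ∈ S.L0 := by
        rcases hu with ⟨rfl, rfl⟩ | ⟨rfl, rfl⟩
        · exact S.g00 _ hx0 _ hx0
        · exact S.g11 _ hy1 _ hy1
      refine ⟨S.bracket u u, mem_dcs_succ S (by trivial) u, huu,
        fun hδ => absurd hδ hδ1, fun _ => hBuu0, uy, ?_, by simp [hfl1], ?_⟩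
      · rcases hu with ⟨rfl, rfl⟩ | ⟨rfl, rfl⟩ <;> omega
      · rcases hu with ⟨rfl, rfl⟩ | ⟨rfl, rfl⟩
        · simp
        · simp
  | succ k hk1 IH =>
      intro hk1N
      have hkN : k ≤ N := by omega
      obtain ⟨r, hrmem, hrn, hrδ1, hrδ0, F, hFk, hFfl, hsort⟩ := IH hkN
      have honek := hone k hk1 hkN
      have hspan := step_span S x y htop hrmem hrn honek
      set s₀ : V := ((S.Rop x) ^ (k - F)) (((S.Rop y) ^ F) u) with hs₀
      have hwF : ((S.Rop y) ^ F) u ∈ S.dcs F := by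
        have := Shifts.pow S hRy F 0 u (by trivial)
        simpa using this
      by_cases hsame : (δ k ↔ δ (k+1))
      · -- multiply by x
        have hpar1 : δ (k+1) → S.bracket r x ∈ S.L1 := by
          intro h
          exact S.g10 r (hrδ1 (hsame.mpr h)) x hx0
        have hpar0 : ¬ δ (k+1) → S.bracket r x ∈ S.L0 := by
          intro h
          exact S.g00 r (hrδ0 (fun hδk => h (hsame.mp hδk))) x hx0
        have hnot : S.bracket r x ∉ S.dcs (k+2) := by
          by_cases hδk : δ k
          · have hδk1 : δ (k+1) := hsame.mp hδk
            obtain ⟨-, hlt⟩ := hδT (k+1) (by omega) hk1N hδk1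
            obtain ⟨v, hvmem, hvnot⟩ := SetLike.exists_of_lt hlt
            have hvL1 : v ∈ S.L1 := hvmem.2
            have hvnot' : v ∉ S.dcs (k+2) := fun h => hvnot ⟨h, hvL1⟩
            obtain ⟨c1, c2, hc⟩ := hspan v hvmem.1
            exact survivor1 S hvL1 hvnot' (S.g10 r (hrδ1 hδk) x hx0)
              (S.g11 r (hrδ1 hδk) y hy1) hc
          · have hδk1 : ¬ δ (k+1) := fun h => hδk (hsame.mpr h)
            obtain ⟨-, hlt⟩ := hδF (k+1) (by omega) hk1N hδk1
            obtain ⟨v, hvmem, hvnot⟩ := SetLike.exists_of_lt hlt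
            have hvL0 : v ∈ S.L0 := hvmem.2
            have hvnot' : v ∉ S.dcs (k+2) := fun h => hvnot ⟨h, hvL0⟩
            obtain ⟨c1, c2, hc⟩ := hspan v hvmem.1
            exact survivor0 S hvL0 hvnot' (S.g00 r (hrδ0 hδk) x hx0)
              (S.g01 r (hrδ0 hδk) y hy1) hc
        refine ⟨S.bracket r x, mem_dcs_succ S hrmem x, hnot, hpar1, hpar0,
          F, by omega, ?_, ?_⟩
        · rw [hflsame k hk1 hsame]
          exact hFfl
        · have h1 : (S.Rop x) (r - s₀) ∈ S.dcs (k+2) := hRx (k+1) _ hsort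
          have h2 : (S.Rop x) s₀ = ((S.Rop x) ^ ((k+1) - F)) (((S.Rop y) ^ F) u) := by
            rw [show (k+1) - F = (k - F) + 1 by omega, pow_apply_succ]
          have h3 : (S.Rop x) (r - s₀)
              = S.bracket r x - ((S.Rop x) ^ ((k+1) - F)) (((S.Rop y) ^ F) u) := by
            rw [map_sub, h2]
            rfl
          rwa [h3] at h1
      · -- multiply by y
        have hpar1 : δ (k+1) → S.bracket r y ∈ S.L1 := by
          intro h
          have hδk : ¬ δ k := fun hδk => hsame ⟨fun _ => h, fun _ => hδk⟩
          exact S.g01 r (hrδ0 hδk) y hy1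
        have hpar0 : ¬ δ (k+1) → S.bracket r y ∈ S.L0 := by
          intro h
          have hδk : δ k := by
            by_contra hδk
            exact hsame ⟨fun hh => absurd hh hδk, fun hh => absurd hh h⟩
          exact S.g11 r (hrδ1 hδk) y hy1
        have hnot : S.bracket r y ∉ S.dcs (k+2) := by
          by_cases hδk : δ k
          · have hδk1 : ¬ δ (k+1) := fun h => hsame ⟨fun _ => h, fun _ => hδk⟩
            obtain ⟨-, hlt⟩ := hδF (k+1) (by omega) hk1N hδk1
            obtain ⟨v, hvmem, hvnot⟩ := SetLike.exists_of_lt hlt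
            have hvL0 : v ∈ S.L0 := hvmem.2
            have hvnot' : v ∉ S.dcs (k+2) := fun h => hvnot ⟨h, hvL0⟩
            obtain ⟨c1, c2, hc⟩ := hspan v hvmem.1
            have hc' : v - (c2 • S.bracket r y + c1 • S.bracket r x) ∈ S.dcs (k+2) := by
              rw [add_comm (c1 • S.bracket r x) (c2 • S.bracket r y)] at hc
              exact hc
            exact survivor0 S hvL0 hvnot' (S.g11 r (hrδ1 hδk) y hy1)
              (S.g10 r (hrδ1 hδk) x hx0) hc'
          · have hδk1 : δ (k+1) := by
              by_contra h
              exact hsame ⟨fun hh => absurd hh hδk, fun hh => absurd hh h⟩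
            obtain ⟨-, hlt⟩ := hδT (k+1) (by omega) hk1N hδk1
            obtain ⟨v, hvmem, hvnot⟩ := SetLike.exists_of_lt hlt
            have hvL1 : v ∈ S.L1 := hvmem.2
            have hvnot' : v ∉ S.dcs (k+2) := fun h => hvnot ⟨h, hvL1⟩
            obtain ⟨c1, c2, hc⟩ := hspan v hvmem.1
            have hc' : v - (c2 • S.bracket r y + c1 • S.bracket r x) ∈ S.dcs (k+2) := by
              rw [add_comm (c1 • S.bracket r x) (c2 • S.bracket r y)] at hc
              exact hc
            exact survivor1 S hvL1 hvnot' (S.g01 r (hrδ0 hδk) y hy1)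
              (S.g00 r (hrδ0 hδk) x hx0) hc'
        refine ⟨S.bracket r y, mem_dcs_succ S hrmem y, hnot, hpar1, hpar0,
          F + 1, by omega, ?_, ?_⟩
        · rw [hflflip k hk1 hsame]
          omega
        · have h1 : (S.Rop y) (r - s₀) ∈ S.dcs (k+2) := hRy (k+1) _ hsort
          have h2' := hswapxy (k - F) F _ hwF
          have h2 : (S.Rop y) s₀ - ((S.Rop x) ^ (k - F)) ((S.Rop y) (((S.Rop y) ^ F) u))
              ∈ S.dcs (k+2) := dcs_antitone S (by omega) h2'
          have h3 : (S.Rop y) (((S.Rop y) ^ F) u) = ((S.Rop y) ^ (F+1)) u :=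
            (pow_apply_succ _ F u).symm
          have h4 : S.bracket r y - ((S.Rop x) ^ ((k+1) - (F+1))) (((S.Rop y) ^ (F+1)) u)
              = (S.Rop y) (r - s₀)
                + ((S.Rop y) s₀ - ((S.Rop x) ^ (k - F)) ((S.Rop y) (((S.Rop y) ^ F) u))) := by
            rw [h3, show (k+1) - (F+1) = k - F by omega, map_sub]
            have : (S.Rop y) r = S.bracket r y := rfl
            rw [this]
            abel
          rw [h4]
          exact add_mem h1 h2

end LeibnizSuper

namespace LeibnizSuper

open Module Submodule Finset

lemma pow_split_apply {V : Type} [AddCommGroup V] [Module ℂ V]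
    (T : Module.End ℂ V) (a b : ℕ) (v : V) :
    (T ^ (a + b)) v = (T ^ a) ((T ^ b) v) := by
  rw [pow_add]; rfl

variable (S : LeibnizSuper V)

lemma final_kill [FiniteDimensional ℂ V] {P Q : Module.End ℂ V}
    (hP : S.Shifts P 1) (hQ : S.Shifts Q 2)
    (hswap : ∀ s k : ℕ, ∀ v ∈ S.dcs k, Q ((P ^ s) v) - (P ^ s) (Q v) ∈ S.dcs (k + s + 3))
    {K : ℕ} {v : V} {ℓ A h : ℕ} (hv : v ∈ S.dcs ℓ)
    (hfam : ∀ c : ℂ, ((P + c • Q) ^ K) v = 0)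
    (hKAh : K ≤ A + h) :
    (P ^ A) ((Q ^ h) v) ∈ S.dcs (A + 2*h + ℓ + 1) := by
  obtain ⟨b, hbh, hbK, hbor⟩ : ∃ b, b ≤ h ∧ b ≤ K ∧ (b = h ∨ b = K) :=
    ⟨min h K, min_le_left h K, min_le_right h K, min_choice h K⟩
  set a := K - b with ha
  have hab : a + b = K := by omega
  have haA : a ≤ A := by omega
  have hkill : (P ^ a) ((Q ^ b) v) ∈ S.dcs (ℓ + a + 2*b + 1) :=
    kill S hP hQ hswap hv hfam hab
  have hwb : (Q ^ b) v ∈ S.dcs (ℓ + 2*b) := by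
    have := Shifts.pow S hQ b ℓ v hv
    exact dcs_antitone S (by omega) this
  have hdiff := comm_shift_pows S hP hQ hswap (h - b) a (ℓ + 2*b) _ hwb
  -- (Q^(h-b)) ((P^a) w) - (P^a) ((Q^(h-b)) w) ∈ dcs (ℓ+2b + a + (h-b)*2 + 1)
  have hmain : (Q ^ (h - b)) ((P ^ a) ((Q ^ b) v)) ∈ S.dcs (ℓ + a + 2*b + 1 + (h-b)*2) :=
    Shifts.pow S hQ (h - b) _ _ hkill
  have hinner : (P ^ a) ((Q ^ (h - b)) ((Q ^ b) v)) ∈ S.dcs (ℓ + a + 2*h + 1) := by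
    have heq : (P ^ a) ((Q ^ (h - b)) ((Q ^ b) v))
        = (Q ^ (h - b)) ((P ^ a) ((Q ^ b) v))
          - ((Q ^ (h - b)) ((P ^ a) ((Q ^ b) v)) - (P ^ a) ((Q ^ (h - b)) ((Q ^ b) v))) := by
      abel
    rw [heq]
    refine sub_mem (dcs_antitone S (by omega) hmain) (dcs_antitone S (by omega) hdiff)
  have houter : (P ^ (A - a)) ((P ^ a) ((Q ^ (h - b)) ((Q ^ b) v)))
      ∈ S.dcs (ℓ + a + 2*h + 1 + (A - a) * 1) := Shifts.pow S hP (A - a) _ _ hinner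
  have hexpr : (P ^ A) ((Q ^ h) v)
      = (P ^ (A - a)) ((P ^ a) ((Q ^ (h - b)) ((Q ^ b) v))) := by
    conv_lhs => rw [show A = (A - a) + a by omega, show h = (h - b) + b by omega]
    rw [pow_split_apply Q (h - b) b v, pow_split_apply P (A - a) a]
  rw [hexpr]
  exact dcs_antitone S (by omega) houter

lemma tele_count (N : ℕ) (g : ℕ → ℕ) (hg : g N = 0)
    (D : ℕ → Prop) [DecidablePred D]
    (hstep : ∀ j, j < N → g j = g (j+1) + (if D j then 1 else 0)) :
    (Finset.filter D (Finset.range N)).card = g 0 := by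
  have key : ∀ d j, j + d = N → (Finset.filter D (Finset.Ico j N)).card = g j := by
    intro d
    induction d with
    | zero =>
        intro j hj
        have : j = N := by omega
        subst this
        simp [hg]
    | succ d ih =>
        intro j hj
        have hjN : j < N := by omega
        have hIco : Finset.Ico j N = insert j (Finset.Ico (j+1) N) :=
          (Finset.insert_Ico_add_one_left_eq_Ico hjN).symm
        rw [hIco, Finset.filter_insert]
        have hj1 : j ∉ Finset.Ico (j+1) N := by simp
        by_cases hD : D j
        · rw [if_pos hD, Finset.card_insert_of_notMem (fun h => hj1 (Finset.mem_of_mem_filter _ h))]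
          rw [ih (j+1) (by omega), hstep j hjN, if_pos hD]
        · rw [if_neg hD, ih (j+1) (by omega), hstep j hjN, if_neg hD, add_zero]
  have := key N 0 (by omega)
  simpa using this

lemma flip_count (M : ℕ) (D : ℕ → Prop) [DecidablePred D] (hD0 : ¬ D 0) :
    ((Finset.filter (fun j => ¬ D j ∧ D (j+1)) (Finset.range M)).card : ℤ)
      - ((Finset.filter (fun j => D j ∧ ¬ D (j+1)) (Finset.range M)).card : ℤ)
      = if D M then 1 else 0 := by
  induction M with
  | zero => simp [hD0]
  | succ M ih =>
      rw [Finset.range_add_one, Finset.filter_insert, Finset.filter_insert]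
      have hM : M ∉ Finset.range M := by simp
      by_cases h1 : D M <;> by_cases h2 : D (M+1)
      · rw [if_neg (by tauto), if_neg (by tauto), ih, if_pos h1, if_pos h2]
      · rw [if_neg (by tauto), if_pos ⟨h1, h2⟩,
          Finset.card_insert_of_notMem (fun h => hM (Finset.mem_of_mem_filter _ h)),
          if_neg h2]
        rw [if_pos h1] at ih
        push_cast
        omega
      · rw [if_pos ⟨h1, h2⟩, if_neg (by tauto),
          Finset.card_insert_of_notMem (fun h => hM (Finset.mem_of_mem_filter _ h)),
          if_pos h2]
        rw [if_neg h1] at ih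
        push_cast
        omega
      · rw [if_neg (by tauto), if_neg (by tauto), ih, if_neg h1, if_neg h2]

lemma flip_split (M : ℕ) (D : ℕ → Prop) [DecidablePred D] :
    (Finset.filter (fun j => ¬ (D j ↔ D (j+1))) (Finset.range M)).card
      = (Finset.filter (fun j => ¬ D j ∧ D (j+1)) (Finset.range M)).card
        + (Finset.filter (fun j => D j ∧ ¬ D (j+1)) (Finset.range M)).card := by
  induction M with
  | zero => simp
  | succ M ih =>
      rw [Finset.range_add_one, Finset.filter_insert, Finset.filter_insert, Finset.filter_insert]
      have hM : M ∉ Finset.range M := by simp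
      have hcard : ∀ (p : ℕ → Prop) [DecidablePred p],
          (insert M (Finset.filter p (Finset.range M))).card
            = (Finset.filter p (Finset.range M)).card + 1 := by
        intro p _
        exact Finset.card_insert_of_notMem (fun h => hM (Finset.mem_of_mem_filter _ h))
      by_cases h1 : D M <;> by_cases h2 : D (M+1)
      · rw [if_neg (by tauto), if_neg (by tauto), if_neg (by tauto)]
        exact ih
      · rw [if_pos (by tauto), if_neg (by tauto), if_pos (by tauto), hcard, hcard]
        omega
      · rw [if_pos (by tauto), if_pos (by tauto), if_neg (by tauto), hcard, hcard]
        omega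
      · rw [if_neg (by tauto), if_neg (by tauto), if_neg (by tauto)]
        exact ih

end LeibnizSuper

namespace LeibnizSuper

open Module Submodule

lemma rank_sup_singleton {V : Type} [AddCommGroup V] [Module ℂ V] [FiniteDimensional ℂ V]
    (p : Submodule ℂ V) {v : V} (hv : v ∉ p) (hv0 : v ≠ 0) :
    finrank ℂ (p ⊔ (ℂ ∙ v) : Submodule ℂ V) = finrank ℂ p + 1 := by
  have hdisj : Disjoint p (ℂ ∙ v) := (Submodule.disjoint_span_singleton' hv0).mpr hv
  have h2 := Submodule.finrank_sup_add_finrank_inf_eq p (ℂ ∙ v)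
  rw [disjoint_iff.mp hdisj, finrank_bot, add_zero, finrank_span_singleton hv0] at h2
  omega

variable (S : LeibnizSuper V)

/-- spanning of `L²` modulo `L³` by the four products of generators -/
lemma W1_span [FiniteDimensional ℂ V] (x y : V)
    (htop : S.dcs 1 ⊔ Submodule.span ℂ {x, y} = ⊤) :
    ∀ v ∈ S.dcs 1, ∃ c1 c2 c3 c4 : ℂ,
      v - (c1 • S.bracket x x + c2 • S.bracket x y + c3 • S.bracket y x + c4 • S.bracket y y)
        ∈ S.dcs 2 := by
  intro v hv
  have hspan : S.dcs 1
      = Submodule.span ℂ {v | ∃ a ∈ S.dcs 0, ∃ b : V, v = S.bracket a b} := rfl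
  rw [hspan] at hv
  induction hv using Submodule.span_induction with
  | mem w hw =>
      obtain ⟨a, -, b, rfl⟩ := hw
      have hb : b ∈ S.dcs 1 ⊔ Submodule.span ℂ {x, y} := htop ▸ Submodule.mem_top
      obtain ⟨w₁, hw₁, s, hs, rfl⟩ := Submodule.mem_sup.mp hb
      obtain ⟨α, β, rfl⟩ := Submodule.mem_span_pair.mp hs
      have ha : a ∈ S.dcs 1 ⊔ Submodule.span ℂ {x, y} := htop ▸ Submodule.mem_top
      obtain ⟨w₂, hw₂, t, ht, rfl⟩ := Submodule.mem_sup.mp ha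
      obtain ⟨γ, ζ, rfl⟩ := Submodule.mem_span_pair.mp ht
      refine ⟨γ*α, γ*β, ζ*α, ζ*β, ?_⟩
      have hexp : S.bracket (w₂ + (γ • x + ζ • y)) (w₁ + (α • x + β • y))
          - ((γ*α) • S.bracket x x + (γ*β) • S.bracket x y
            + (ζ*α) • S.bracket y x + (ζ*β) • S.bracket y y)
          = S.bracket w₂ (w₁ + (α • x + β • y))
            + S.bracket (γ • x + ζ • y) w₁ := by
        simp only [map_add, map_smul, LinearMap.add_apply, LinearMap.smul_apply, mul_smul]
        module
      rw [hexp]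
      refine add_mem (mem_dcs_succ S hw₂ _) ?_
      have := bracket_mem_dcs_add S 1 0 (γ • x + ζ • y) (by trivial) w₁ hw₁
      simpa using this
  | zero => exact ⟨0, 0, 0, 0, by simpa using zero_mem _⟩
  | add v₁ v₂ h₁ h₂ ih₁ ih₂ =>
      obtain ⟨c1, c2, c3, c4, hc⟩ := ih₁
      obtain ⟨d1, d2, d3, d4, hd⟩ := ih₂
      refine ⟨c1+d1, c2+d2, c3+d3, c4+d4, ?_⟩
      have heq : v₁ + v₂ - ((c1+d1) • S.bracket x x + (c2+d2) • S.bracket x y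
            + (c3+d3) • S.bracket y x + (c4+d4) • S.bracket y y)
          = (v₁ - (c1 • S.bracket x x + c2 • S.bracket x y + c3 • S.bracket y x
              + c4 • S.bracket y y))
            + (v₂ - (d1 • S.bracket x x + d2 • S.bracket x y + d3 • S.bracket y x
              + d4 • S.bracket y y)) := by module
      rw [heq]
      exact add_mem hc hd
  | smul t w hw ih =>
      obtain ⟨c1, c2, c3, c4, hc⟩ := ih
      refine ⟨t*c1, t*c2, t*c3, t*c4, ?_⟩
      have heq : t • w - ((t*c1) • S.bracket x x + (t*c2) • S.bracket x y
            + (t*c3) • S.bracket y x + (t*c4) • S.bracket y y)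
          = t • (w - (c1 • S.bracket x x + c2 • S.bracket x y + c3 • S.bracket y x
              + c4 • S.bracket y y)) := by module
      rw [heq]
      exact Submodule.smul_mem _ _ hc

end LeibnizSuper

open LeibnizSuper Module Submodule Finset in
/-- Theorem 3.4 of the paper: case of one generator in `L₀`, one in
`L₁`, with `dim (L³)₀ = n - 2` and `dim L₀³ ≤ n - 4`.  The nilindex is less
than `n + m`, i.e. `L^{n+m-1} = 0`. -/
theorem leibnizSuper_nilindex_lt_of_mixed_generators_dimL03_le
    {V : Type} [AddCommGroup V] [Module ℂ V] [FiniteDimensional ℂ V]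
    (S : LeibnizSuper V) (n m : ℕ) (hn : 3 ≤ n) (hm : 2 ≤ m)
    (hdim0 : Module.finrank ℂ S.L0 = n) (hdim1 : Module.finrank ℂ S.L1 = m)
    (hnilp : ∃ s, S.dcs s = ⊥)
    (hchar : S.charSeqLE n m)
    (x₁ y₁ : V) (hx₁0 : x₁ ∈ S.L0) (hx₁ : x₁ ∉ S.dcs 1)
    (hy₁1 : y₁ ∈ S.L1) (hy₁ : y₁ ∉ S.dcs 1)
    (hgen : S.generates {x₁, y₁})
    (hL3 : Module.finrank ℂ ↥(S.dcs 2 ⊓ S.L0) = n - 2)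
    (hL03 : Module.finrank ℂ ↥(S.dcs0 2) + 4 ≤ n) :
    S.dcs (n + m - 2) = ⊥ := by
  classical
  by_contra hW
  set N : ℕ := n + m - 2 with hNdef
  have hN3 : 3 ≤ N := by omega
  have hN1 : 1 ≤ N := by omega
  -- dimension of V
  have hdimV : finrank ℂ V = n + m := by
    have := Submodule.finrank_add_eq_of_isCompl S.compl
    rw [hdim0, hdim1] at this
    omega
  -- generation gives the top split
  have htop : S.dcs 1 ⊔ Submodule.span ℂ {x₁, y₁} = ⊤ := by
    apply hgen
    · intro v hv
      rcases hv with rfl | hv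
      · exact Submodule.mem_sup_right (Submodule.subset_span (by simp))
      · rw [Set.mem_singleton_iff] at hv
        subst hv
        exact Submodule.mem_sup_right (Submodule.subset_span (by simp))
    · intro a _ b _
      exact Submodule.mem_sup_left (mem_dcs_succ S (by trivial) b)
  -- strictness
  have hnonbot : ∀ k, k ≤ N → S.dcs k ≠ ⊥ := by
    intro k hk hbot
    exact hW (le_bot_iff.mp (hbot ▸ dcs_antitone S hk))
  have hstrict : ∀ k, k ≤ N → finrank ℂ (S.dcs (k+1)) < finrank ℂ (S.dcs k) := by
    intro k hk
    refine Submodule.finrank_lt_finrank_of_lt (lt_of_le_of_ne (dcs_succ_le S k) ?_)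
    intro he
    exact hnonbot k hk (dcs_stall S he hnilp)
  -- nonzero generators
  have hx₁ne : x₁ ≠ 0 := fun h => hx₁ (h ▸ zero_mem _)
  have hy₁ne : y₁ ≠ 0 := fun h => hy₁ (h ▸ zero_mem _)
  -- dim of L²  (= dcs 1)
  have hynotsup : y₁ ∉ S.dcs 1 ⊔ (ℂ ∙ x₁) := by
    intro h
    obtain ⟨w, hw, s, hs, hsum⟩ := Submodule.mem_sup.mp h
    obtain ⟨c, rfl⟩ := Submodule.mem_span_singleton.mp hs
    have := congrArg S.p1 hsum
    rw [map_add, map_smul, p1_eq_of_mem S hy₁1, p1_eq_zero_of_mem S hx₁0, smul_zero,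
      add_zero] at this
    exact hy₁ (this ▸ (dcs_graded S 1 w hw).2)
  have hd1 : finrank ℂ (S.dcs 1) = n + m - 2 := by
    have e1 : finrank ℂ (S.dcs 1 ⊔ (ℂ ∙ x₁) : Submodule ℂ V) = finrank ℂ (S.dcs 1) + 1 :=
      rank_sup_singleton _ hx₁ hx₁ne
    have e2 : finrank ℂ ((S.dcs 1 ⊔ (ℂ ∙ x₁)) ⊔ (ℂ ∙ y₁) : Submodule ℂ V)
        = finrank ℂ (S.dcs 1) + 2 := by
      rw [rank_sup_singleton _ hynotsup hy₁ne, e1]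
    have e3 : (S.dcs 1 ⊔ (ℂ ∙ x₁)) ⊔ (ℂ ∙ y₁) = ⊤ := by
      rw [sup_assoc, ← Submodule.span_insert, show (insert x₁ {y₁} : Set V) = {x₁, y₁} from rfl]
      exact htop
    rw [e3, finrank_top, hdimV] at e2
    omega
  -- dims of the whole chain
  have hub : ∀ j, j ≤ N - 1 → finrank ℂ (S.dcs (1+j)) + j ≤ n + m - 2 := by
    intro j
    induction j with
    | zero => intro _; simpa using hd1.le
    | succ j ih =>
        intro hj
        have h1 := hstrict (1+j) (by omega)
        have h2 := ih (by omega)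
        have : (1 : ℕ) + (j+1) = (1+j) + 1 := by omega
        rw [this]
        omega
  have hlb : ∀ j, j ≤ N - 1 → 1 + j ≤ finrank ℂ (S.dcs (N - j)) := by
    intro j
    induction j with
    | zero =>
        intro _
        simp only [Nat.sub_zero]
        by_contra h
        push_neg at h
        have h0 : finrank ℂ (S.dcs N) = 0 := by omega
        exact hnonbot N le_rfl (Submodule.finrank_eq_zero.mp h0)
    | succ j ih =>
        intro hj
        have h1 := hstrict (N - (j+1)) (by omega)
        have h2 : (N - (j+1)) + 1 = N - j := by omega
        rw [h2] at h1
        have := ih (by omega)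
        omega
  have hd : ∀ k, 1 ≤ k → k ≤ N → finrank ℂ (S.dcs k) = n + m - 1 - k := by
    intro k hk1 hkN
    have h1 := hub (k - 1) (by omega)
    rw [show 1 + (k-1) = k by omega] at h1
    have h2 := hlb (N - k) (by omega)
    rw [show N - (N - k) = k by omega] at h2
    omega
  have hbot : S.dcs (N + 1) = ⊥ := by
    have h1 := hstrict N le_rfl
    have h2 := hd N hN1 le_rfl
    have h3 : finrank ℂ (S.dcs (N+1)) = 0 := by omega
    exact Submodule.finrank_eq_zero.mp h3
  have hd' : ∀ k, 1 ≤ k → k ≤ N + 1 → finrank ℂ (S.dcs k) = n + m - 1 - k := by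
    intro k hk1 hkN
    rcases Nat.lt_or_ge k (N+1) with h | h
    · exact hd k hk1 (by omega)
    · have : k = N + 1 := by omega
      subst this
      rw [hbot, finrank_bot]
      omega
  -- graded dimension count
  have hsumk : ∀ k : ℕ,
      finrank ℂ ↥(S.dcs k ⊓ S.L0) + finrank ℂ ↥(S.dcs k ⊓ S.L1) = finrank ℂ (S.dcs k) := by
    intro k
    have hsup : (S.dcs k ⊓ S.L0) ⊔ (S.dcs k ⊓ S.L1) = S.dcs k := by
      apply le_antisymm (sup_le inf_le_left inf_le_left)
      intro v hv
      rw [← p0_add_p1 S v]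
      exact add_mem
        (Submodule.mem_sup_left ⟨(dcs_graded S k v hv).1, p0_mem S v⟩)
        (Submodule.mem_sup_right ⟨(dcs_graded S k v hv).2, p1_mem S v⟩)
    have hinf : (S.dcs k ⊓ S.L0) ⊓ (S.dcs k ⊓ S.L1) = ⊥ := by
      rw [← le_bot_iff, ← S.compl.inf_eq_bot]
      exact le_inf (inf_le_of_left_le inf_le_right) (inf_le_of_right_le inf_le_right)
    have := Submodule.finrank_sup_add_finrank_inf_eq (S.dcs k ⊓ S.L0) (S.dcs k ⊓ S.L1)
    rw [hsup, hinf, finrank_bot, add_zero] at this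
    omega
  have hb1 : finrank ℂ ↥(S.dcs 1 ⊓ S.L1) = m - 1 ∧ finrank ℂ ↥(S.dcs 1 ⊓ S.L0) = n - 1 := by
    have hyni : y₁ ∉ S.dcs 1 ⊓ S.L1 := fun h => hy₁ h.1
    have h1 : finrank ℂ ((S.dcs 1 ⊓ S.L1) ⊔ (ℂ ∙ y₁) : Submodule ℂ V)
        = finrank ℂ ↥(S.dcs 1 ⊓ S.L1) + 1 := rank_sup_singleton _ hyni hy₁ne
    have hle1 : (S.dcs 1 ⊓ S.L1) ⊔ (ℂ ∙ y₁) ≤ S.L1 :=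
      sup_le inf_le_right ((Submodule.span_singleton_le_iff_mem _ _).mpr hy₁1)
    have h2 : finrank ℂ ↥(S.dcs 1 ⊓ S.L1) + 1 ≤ m := by
      rw [← h1, ← hdim1]
      exact Submodule.finrank_mono hle1
    have hxni : x₁ ∉ S.dcs 1 ⊓ S.L0 := fun h => hx₁ h.1
    have h3 : finrank ℂ ((S.dcs 1 ⊓ S.L0) ⊔ (ℂ ∙ x₁) : Submodule ℂ V)
        = finrank ℂ ↥(S.dcs 1 ⊓ S.L0) + 1 := rank_sup_singleton _ hxni hx₁ne
    have hle3 : (S.dcs 1 ⊓ S.L0) ⊔ (ℂ ∙ x₁) ≤ S.L0 :=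
      sup_le inf_le_right ((Submodule.span_singleton_le_iff_mem _ _).mpr hx₁0)
    have h4 : finrank ℂ ↥(S.dcs 1 ⊓ S.L0) + 1 ≤ n := by
      rw [← h3, ← hdim0]
      exact Submodule.finrank_mono hle3
    have h5 := hsumk 1
    rw [hd1] at h5
    omega
  have hb2 : finrank ℂ ↥(S.dcs 2 ⊓ S.L1) = m - 1 := by
    have h1 := hsumk 2
    rw [hd 2 (by omega) (by omega), hL3] at h1
    omega
  -- δ and its properties
  set δ : ℕ → Prop := fun k =>
    finrank ℂ ↥(S.dcs (k+1) ⊓ S.L1) < finrank ℂ ↥(S.dcs k ⊓ S.L1) with hδdef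
  have hδ1 : ¬ δ 1 := by
    rw [hδdef]
    simp only [not_lt]
    rw [hb1.1, hb2]
  have hmono0 : ∀ k, finrank ℂ ↥(S.dcs (k+1) ⊓ S.L0) ≤ finrank ℂ ↥(S.dcs k ⊓ S.L0) :=
    fun k => Submodule.finrank_mono (inf_le_inf_right _ (dcs_succ_le S k))
  have hmono1 : ∀ k, finrank ℂ ↥(S.dcs (k+1) ⊓ S.L1) ≤ finrank ℂ ↥(S.dcs k ⊓ S.L1) :=
    fun k => Submodule.finrank_mono (inf_le_inf_right _ (dcs_succ_le S k))
  have hone : ∀ k, 1 ≤ k → k ≤ N →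
      finrank ℂ (S.dcs k) = finrank ℂ (S.dcs (k+1)) + 1 := by
    intro k hk1 hkN
    have h1 := hd' k hk1 (by omega)
    have h2 := hd' (k+1) (by omega) (by omega)
    omega
  have hδT : ∀ k, 1 ≤ k → k ≤ N → δ k →
      S.dcs (k+1) ⊓ S.L0 = S.dcs k ⊓ S.L0 ∧ S.dcs (k+1) ⊓ S.L1 < S.dcs k ⊓ S.L1 := by
    intro k hk1 hkN hδk
    simp only [hδdef] at hδk
    constructor
    · refine Submodule.eq_of_le_of_finrank_le (inf_le_inf_right _ (dcs_succ_le S k)) ?_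
      have := hsumk k
      have := hsumk (k+1)
      have := hone k hk1 hkN
      have := hmono0 k
      omega
    · refine lt_of_le_of_ne (inf_le_inf_right _ (dcs_succ_le S k)) ?_
      intro he
      rw [he] at hδk
      omega
  have hδF : ∀ k, 1 ≤ k → k ≤ N → ¬ δ k →
      S.dcs (k+1) ⊓ S.L1 = S.dcs k ⊓ S.L1 ∧ S.dcs (k+1) ⊓ S.L0 < S.dcs k ⊓ S.L0 := by
    intro k hk1 hkN hδk
    simp only [hδdef, not_lt] at hδk
    constructor
    · exact Submodule.eq_of_le_of_finrank_le (inf_le_inf_right _ (dcs_succ_le S k)) hδk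
    · refine lt_of_le_of_ne (inf_le_inf_right _ (dcs_succ_le S k)) ?_
      intro he
      have h1 := hsumk k
      have h2 := hsumk (k+1)
      have h3 := hone k hk1 hkN
      have h4 := hmono1 k
      rw [← he] at h1
      omega
  -- choose the generator u with B u u ∉ L³
  have hBor : S.bracket x₁ x₁ ∉ S.dcs 2 ∨ S.bracket y₁ y₁ ∉ S.dcs 2 := by
    have hlt01 : S.dcs 2 ⊓ S.L0 < S.dcs 1 ⊓ S.L0 := by
      refine lt_of_le_of_ne (inf_le_inf_right _ (dcs_succ_le S 1)) ?_
      intro he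
      have : (n - 2 : ℕ) = n - 1 := by rw [← hL3, ← hb1.2, he]
      omega
    obtain ⟨v₀, hv₀mem, hv₀not⟩ := SetLike.exists_of_lt hlt01
    have hv₀L0 : v₀ ∈ S.L0 := hv₀mem.2
    have hv₀not' : v₀ ∉ S.dcs 2 := fun h => hv₀not ⟨h, hv₀L0⟩
    obtain ⟨c1, c2, c3, c4, hc⟩ := W1_span S x₁ y₁ htop v₀ hv₀mem.1
    by_contra hcon
    push_neg at hcon
    obtain ⟨hxx2, hyy2⟩ := hcon
    have hp0 := (dcs_graded S 2 _ hc).1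
    rw [map_sub, p0_eq_of_mem S hv₀L0] at hp0
    have hcomb : S.p0 (c1 • S.bracket x₁ x₁ + c2 • S.bracket x₁ y₁ + c3 • S.bracket y₁ x₁
        + c4 • S.bracket y₁ y₁) = c1 • S.bracket x₁ x₁ + c4 • S.bracket y₁ y₁ := by
      simp only [map_add, map_smul]
      rw [p0_eq_of_mem S (S.g00 _ hx₁0 _ hx₁0), p0_eq_zero_of_mem S (S.g01 _ hx₁0 _ hy₁1),
        p0_eq_zero_of_mem S (S.g10 _ hy₁1 _ hx₁0), p0_eq_of_mem S (S.g11 _ hy₁1 _ hy₁1)]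
      simp
    rw [hcomb] at hp0
    refine hv₀not' ?_
    have h2 : v₀ = (v₀ - (c1 • S.bracket x₁ x₁ + c4 • S.bracket y₁ y₁))
        + (c1 • S.bracket x₁ x₁ + c4 • S.bracket y₁ y₁) := by module
    rw [h2]
    exact add_mem hp0 (add_mem (Submodule.smul_mem _ _ hxx2) (Submodule.smul_mem _ _ hyy2))
  obtain ⟨u, uy, hu, huu⟩ : ∃ u uy, ((u = x₁ ∧ uy = 0) ∨ (u = y₁ ∧ uy = 1))
      ∧ S.bracket u u ∉ S.dcs 2 := by
    rcases hBor with h | h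
    · exact ⟨x₁, 0, Or.inl ⟨rfl, rfl⟩, h⟩
    · exact ⟨y₁, 1, Or.inr ⟨rfl, rfl⟩, h⟩
  -- the flip-counting function
  set fl : ℕ → ℕ := fun k =>
    (Finset.filter (fun j => ¬ (δ (j+1) ↔ δ (j+1+1))) (Finset.range (k-1))).card with hfldef
  have hfl1 : fl 1 = 0 := by simp [hfldef]
  have hflsame : ∀ k, 1 ≤ k → (δ k ↔ δ (k+1)) → fl (k+1) = fl k := by
    intro k hk1 hiff
    obtain ⟨k', rfl⟩ : ∃ k', k = k' + 1 := ⟨k - 1, by omega⟩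
    simp only [hfldef]
    rw [show k' + 1 + 1 - 1 = k' + 1 by omega, show k' + 1 - 1 = k' by omega,
      Finset.range_add_one, Finset.filter_insert, if_neg (not_not_intro hiff)]
  have hflflip : ∀ k, 1 ≤ k → ¬ (δ k ↔ δ (k+1)) → fl (k+1) = fl k + 1 := by
    intro k hk1 hiff
    obtain ⟨k', rfl⟩ : ∃ k', k = k' + 1 := ⟨k - 1, by omega⟩
    simp only [hfldef]
    rw [show k' + 1 + 1 - 1 = k' + 1 by omega, show k' + 1 - 1 = k' by omega,
      Finset.range_add_one, Finset.filter_insert, if_pos hiff,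
      Finset.card_insert_of_notMem (fun h => by
        have := Finset.mem_of_mem_filter _ h
        simp at this)]
  -- counting
  have htele : (Finset.filter (fun j => δ (j+1)) (Finset.range N)).card = m - 1 := by
    have hstep : ∀ j, j < N →
        (fun j => finrank ℂ ↥(S.dcs (j+1) ⊓ S.L1)) j
          = (fun j => finrank ℂ ↥(S.dcs (j+1) ⊓ S.L1)) (j+1)
            + (if (fun j => δ (j+1)) j then 1 else 0) := by
      intro j hj
      simp only []
      have h1 := hsumk (j+1)
      have h2 := hsumk (j+1+1)
      have h3 := hone (j+1) (by omega) (by omega)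
      have h4 := hmono0 (j+1)
      have h5 := hmono1 (j+1)
      by_cases hδk : δ (j+1)
      · rw [if_pos hδk]
        simp only [hδdef] at hδk
        omega
      · rw [if_neg hδk]
        simp only [hδdef, not_lt] at hδk
        omega
    have hg : (fun j => finrank ℂ ↥(S.dcs (j+1) ⊓ S.L1)) N = 0 := by
      simp only []
      rw [hbot, bot_inf_eq, finrank_bot]
    have := tele_count N (fun j => finrank ℂ ↥(S.dcs (j+1) ⊓ S.L1)) hg
      (fun j => δ (j+1)) hstep
    rw [this]
    exact hb1.1
  set f01 : ℕ := (Finset.filter (fun j => ¬ δ (j+1) ∧ δ (j+1+1)) (Finset.range (N-1))).card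
    with hf01def
  set f10 : ℕ := (Finset.filter (fun j => δ (j+1) ∧ ¬ δ (j+1+1)) (Finset.range (N-1))).card
    with hf10def
  have hsplitf : fl N = f01 + f10 := by
    simp only [hfldef, hf01def, hf10def]
    exact flip_split (N-1) (fun j => δ (j+1))
  have hf01le : f01 ≤ m - 1 := by
    rw [← htele, hf01def]
    apply Finset.card_le_card_of_injOn (fun j => j + 1)
    · intro j hj
      simp only [Finset.coe_filter, Finset.mem_coe, Set.mem_setOf_eq, Finset.mem_filter, Finset.mem_range] at hj ⊢
      exact ⟨by omega, hj.2.2⟩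
    · intro a _ b _ h
      beta_reduce at h
      omega
  have hcardnot : (Finset.filter (fun j => ¬ δ (j+1)) (Finset.range N)).card = n - 1 := by
    have h := Finset.card_filter_add_card_filter_not
      (s := Finset.range N) (p := fun j => δ (j+1))
    beta_reduce at h
    rw [Finset.card_range] at h
    have h2 : (Finset.filter (fun j => δ (j+1)) (Finset.range N)).card
        + (Finset.filter (fun j => ¬ δ (j+1)) (Finset.range N)).card = N := by
      convert h using 3
    rw [htele] at h2
    omega
  have hT : (Finset.filter (fun j => ¬ δ (j+1) ∧ j ≠ 0) (Finset.range N)).card = n - 2 := by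
    have hins : Finset.filter (fun j => ¬ δ (j+1)) (Finset.range N)
        = insert 0 (Finset.filter (fun j => ¬ δ (j+1) ∧ j ≠ 0) (Finset.range N)) := by
      ext j
      simp only [Finset.mem_filter, Finset.mem_insert, Finset.mem_range]
      constructor
      · rintro ⟨hjN, hnd⟩
        by_cases hj0 : j = 0
        · exact Or.inl hj0
        · exact Or.inr ⟨hjN, hnd, hj0⟩
      · rintro (rfl | ⟨hjN, hnd, -⟩)
        · exact ⟨by omega, by simpa using hδ1⟩
        · exact ⟨hjN, hnd⟩
    rw [hins, Finset.card_insert_of_notMem (by simp)] at hcardnot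
    omega
  have hf10le : f10 ≤ n - 2 := by
    rw [← hT, hf10def]
    apply Finset.card_le_card_of_injOn (fun j => j + 1)
    · intro j hj
      simp only [Finset.coe_filter, Finset.mem_coe, Set.mem_setOf_eq, Finset.mem_filter, Finset.mem_range] at hj ⊢
      exact ⟨by omega, hj.2.2, by omega⟩
    · intro a _ b _ h
      beta_reduce at h
      omega
  have hfliptel : ((f01 : ℤ)) - (f10 : ℤ) = if δ (N-1+1) then 1 else 0 := by
    rw [hf01def, hf10def]
    exact flip_count (N-1) (fun j => δ (j+1)) (by simpa using hδ1)
  rw [show N - 1 + 1 = N by omega] at hfliptel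
  -- the representative chain
  obtain ⟨r, hrmem, hrnot, hrδ1, hrδ0, F, hFN, hFval, hsorted⟩ :=
    chain_exists S x₁ y₁ u N hN1 δ fl htop hone hδT hδF hδ1 uy hu hx₁0 hy₁1 huu
      hfl1 hflsame hflflip N hN1 le_rfl
  have hrne : r ≠ 0 := fun h => hrnot (h ▸ zero_mem _)
  have hreq : r = ((S.Rop x₁) ^ (N - F)) (((S.Rop y₁) ^ F) u) := by
    have h1 := hsorted
    rw [hbot] at h1
    exact sub_eq_zero.mp (by simpa using h1)
  -- operator identities
  set z₁ : V := S.bracket y₁ y₁ with hz₁def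
  have hz₁W1 : z₁ ∈ S.dcs 1 := mem_dcs_succ S (by trivial) y₁
  have hz₁L0 : z₁ ∈ S.L0 := S.g11 _ hy₁1 _ hy₁1
  have hxy2 : S.bracket x₁ y₁ ∈ S.dcs 2 := by
    have hmem1 : S.bracket x₁ y₁ ∈ S.dcs 1 ⊓ S.L1 :=
      ⟨mem_dcs_succ S (by trivial) y₁, S.g01 _ hx₁0 _ hy₁1⟩
    rw [← (hδF 1 le_rfl hN1 hδ1).1] at hmem1
    exact hmem1.1
  have hRx : S.Shifts (S.Rop x₁) 1 := shifts_Rop S (by trivial)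
  have hRy : S.Shifts (S.Rop y₁) 1 := shifts_Rop S (by trivial)
  have hQ2 : S.Shifts (S.Rop z₁) 2 := shifts_Rop S hz₁W1
  have hxz3 : S.bracket x₁ z₁ ∈ S.dcs 3 := by
    have hj := jac11 S x₁ y₁ y₁ hy₁1 hy₁1
    rw [← hz₁def] at hj
    rw [hj]
    exact add_mem (mem_dcs_succ S hxy2 y₁) (mem_dcs_succ S hxy2 y₁)
  have hJ4 : S.Shifts (S.Rop (S.bracket x₁ z₁)) 4 := shifts_Rop S hxz3
  have hcommxz : ∀ v : V, (S.Rop z₁) ((S.Rop x₁) v)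
      = (S.Rop x₁) ((S.Rop z₁) v) + (S.Rop (S.bracket x₁ z₁)) v := by
    intro v
    have := jac00 S v x₁ z₁ hx₁0 hz₁L0
    simp only [Rop_apply]
    rw [this]
    abel
  have hswapxz : ∀ s k : ℕ, ∀ v ∈ S.dcs k,
      (S.Rop z₁) (((S.Rop x₁) ^ s) v) - ((S.Rop x₁) ^ s) ((S.Rop z₁) v)
        ∈ S.dcs (k + s + 3) := by
    intro s
    match s with
    | 0 => intro k v hv; simpa using zero_mem _
    | (s+1) =>
        intro k v hv
        have := comm_shift S hcommxz hRx hJ4 s k v hv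
        exact dcs_antitone S (by omega) this
  have hQend : S.Rop z₁ = (2:ℂ) • (S.Rop y₁ * S.Rop y₁) := by
    apply LinearMap.ext
    intro a
    have hj := jac11 S a y₁ y₁ hy₁1 hy₁1
    rw [← hz₁def] at hj
    simp only [Rop_apply, LinearMap.smul_apply, Module.End.mul_apply]
    rw [hj, two_smul]
  have hRy2 : (S.Rop y₁) ^ 2 = ((2:ℂ)⁻¹) • S.Rop z₁ := by
    rw [pow_two, hQend, smul_smul, inv_mul_cancel₀ (two_ne_zero), one_smul]
  have hRyEven : ∀ g : ℕ, (S.Rop y₁) ^ (2*g) = (((2:ℂ)⁻¹)^g) • ((S.Rop z₁) ^ g) := by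
    intro g
    rw [pow_mul, hRy2, smul_pow]
  -- the characteristic sequence family
  have hxcz : ∀ c : ℂ, (x₁ + c • z₁) ∈ S.L0 ∧ (x₁ + c • z₁) ∉ S.dcs0 1 := by
    intro c
    refine ⟨add_mem hx₁0 (Submodule.smul_mem _ _ hz₁L0), ?_⟩
    intro hmem
    have h1 : x₁ + c • z₁ ∈ S.dcs 1 := dcs0_one_le S hmem
    have h2 : x₁ = (x₁ + c • z₁) - c • z₁ := by module
    exact hx₁ (h2 ▸ sub_mem h1 (Submodule.smul_mem _ _ hz₁W1))
  have hflipeq : ∀ c : ℂ, S.bracket.flip (x₁ + c • z₁) = S.Rop x₁ + c • S.Rop z₁ := by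
    intro c
    rw [map_add, map_smul]
  have hfam0x : ∀ c : ℂ, ((S.Rop x₁ + c • S.Rop z₁) ^ (n-2)) x₁ = 0 := by
    intro c
    have h := (hchar _ (hxcz c).1 (hxcz c).2).1 x₁ hx₁0
    rwa [hflipeq c] at h
  have hfam0z : ∀ c : ℂ, ((S.Rop x₁ + c • S.Rop z₁) ^ (n-2)) z₁ = 0 := by
    intro c
    have h := (hchar _ (hxcz c).1 (hxcz c).2).1 z₁ hz₁L0
    rwa [hflipeq c] at h
  have hfam1y : ∀ c : ℂ, ((S.Rop x₁ + c • S.Rop z₁) ^ (m-1)) y₁ = 0 := by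
    intro c
    have h := (hchar _ (hxcz c).1 (hxcz c).2).2 y₁ hy₁1
    rwa [hflipeq c] at h
  have hmembot : ∀ w : V, w ∈ S.dcs (N+1) → w = 0 := by
    intro w hw
    rw [hbot] at hw
    simpa using hw
  -- final contradiction
  have hgoal : ((S.Rop x₁) ^ (N - F)) (((S.Rop y₁) ^ F) u) ∈ S.dcs (N+1) := by
    by_cases hDN : δ N
    · rw [if_pos hDN] at hfliptel
      have hfodd : fl N = 2*f10 + 1 := by omega
      rcases hu with ⟨hux, huy⟩ | ⟨hux, huy⟩
      · -- u = x₁ : free case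
        rw [hux]
        have hF : F = 2*f10 + 1 := by omega
        have hsplit2 : ((S.Rop y₁) ^ F) x₁
            = ((S.Rop y₁) ^ (2*f10)) ((S.Rop y₁) x₁) := by
          rw [hF, pow_split_apply (S.Rop y₁) (2*f10) 1, pow_one]
        rw [hsplit2, hRyEven f10]
        have hRyx : (S.Rop y₁) x₁ = S.bracket x₁ y₁ := rfl
        rw [hRyx]
        simp only [LinearMap.smul_apply, map_smul]
        refine Submodule.smul_mem _ _ ?_
        have h1 : ((S.Rop z₁) ^ f10) (S.bracket x₁ y₁) ∈ S.dcs (2 + f10*2) :=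
          Shifts.pow S hQ2 f10 2 _ hxy2
        have h2 := Shifts.pow S hRx (N-F) _ _ h1
        exact dcs_antitone S (by omega) h2
      · -- u = y₁ : kill on L1
        rw [hux]
        have hF : F = 2*(f10 + 1) := by omega
        have hsplit2 : ((S.Rop y₁) ^ F) y₁ = (((2:ℂ)⁻¹)^(f10+1)) • ((S.Rop z₁) ^ (f10+1)) y₁ := by
          rw [hF, hRyEven (f10+1)]
          simp only [LinearMap.smul_apply]
        rw [hsplit2]
        simp only [map_smul]
        refine Submodule.smul_mem _ _ ?_
        have hkill := final_kill S hRx hQ2 hswapxz (v := y₁) (ℓ := 0) (A := N - F)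
          (h := f10 + 1) (by trivial) hfam1y (by omega)
        exact dcs_antitone S (by omega) hkill
    · rw [if_neg hDN] at hfliptel
      have hfeven : fl N = 2*f01 := by omega
      rcases hu with ⟨hux, huy⟩ | ⟨hux, huy⟩
      · -- u = x₁ : kill on L0 with v = x₁
        rw [hux]
        have hF : F = 2*f01 := by omega
        have hsplit2 : ((S.Rop y₁) ^ F) x₁ = (((2:ℂ)⁻¹)^f01) • ((S.Rop z₁) ^ f01) x₁ := by
          rw [hF, hRyEven f01]
          simp only [LinearMap.smul_apply]
        rw [hsplit2]
        simp only [map_smul]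
        refine Submodule.smul_mem _ _ ?_
        have hkill := final_kill S hRx hQ2 hswapxz (v := x₁) (ℓ := 0) (A := N - F)
          (h := f01) (by trivial) hfam0x (by omega)
        exact dcs_antitone S (by omega) hkill
      · -- u = y₁ : kill on L0 with v = z₁
        rw [hux]
        have hF : F = 2*f01 + 1 := by omega
        have hsplit2 : ((S.Rop y₁) ^ F) y₁
            = (((2:ℂ)⁻¹)^f01) • ((S.Rop z₁) ^ f01) z₁ := by
          rw [hF, pow_split_apply (S.Rop y₁) (2*f01) 1, pow_one]
          have : (S.Rop y₁) y₁ = z₁ := rfl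
          rw [this, hRyEven f01]
          simp only [LinearMap.smul_apply]
        rw [hsplit2]
        simp only [map_smul]
        refine Submodule.smul_mem _ _ ?_
        have hkill := final_kill S hRx hQ2 hswapxz (v := z₁) (ℓ := 1) (A := N - F)
          (h := f01) hz₁W1 hfam0z (by omega)
        exact dcs_antitone S (by omega) hkill
  exact hrne (hmembot r (hreq ▸ hgoal))
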